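/- Let α = 3 - 2√2 and for 0 ≤ j ≤ i ≤ n define r(i,j) = (i - j) + (1 - α^{i-j})·(2 - α^{i+j+1} + α^{2j+1} + α^{2n-2i+1}·(1 - α^{i-j} - 2α^{i+j+1})) / (4√2·(1 - α^{2n+2})). Then for all fixed j and all i with j ≤ i < n, r(i+1, j) > r(i, j). -/
import Mathlib


set_option maxHeartbeats 1600000 in
theorem stmt_7 (α : ℝ) (hα : α = 3 - 2 * Real.sqrt 2) (n : ℕ)
    (r : ℕ → ℕ → ℝ)
    (hr : ∀ i j, j ≤ i → i ≤ n → r i j = (i - j : ℝ) +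
      (1 - α ^ (i - j)) * (2 - α ^ (i + j + 1) + α ^ (2 * j + 1) +
        α ^ (2 * n - 2 * i + 1) * (1 - α ^ (i - j) - 2 * α ^ (i + j + 1))) /
      (4 * Real.sqrt 2 * (1 - α ^ (2 * n + 2)))) :
    ∀ i j, j ≤ i → i < n → r (i + 1) j > r i j := by
  intro i j hji hin
  have hs2 : Real.sqrt 2 ^ 2 = 2 := Real.sq_sqrt (by norm_num)
  have hs0 : (0:ℝ) ≤ Real.sqrt 2 := Real.sqrt_nonneg 2
  have hs1 : (1.414:ℝ) < Real.sqrt 2 := by nlinarith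
  have hs3 : Real.sqrt 2 < 1.415 := by nlinarith
  have hα0 : 0 < α := by rw [hα]; nlinarith
  have hα1 : α < 1 := by rw [hα]; nlinarith
  have hα5 : α < 1/5 := by rw [hα]; nlinarith
  have hpow1 : ∀ e : ℕ, α ^ e ≤ 1 := fun e => pow_le_one₀ hα0.le hα1.le
  have hpow0 : ∀ e : ℕ, 0 < α ^ e := fun e => pow_pos hα0 e
  have hpowa : ∀ e : ℕ, α ^ (e+1) ≤ α := by
    intro e
    calc α ^ (e+1) = α ^ e * α := pow_succ α e
    _ ≤ 1 * α := by nlinarith [hpow1 e, hpow0 e]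
    _ = α := one_mul α
  have hα2 : α ^ 2 = 17 - 12 * Real.sqrt 2 := by
    rw [hα]; linear_combination 4 * hs2
  have hp2 : α ^ (2*n+2) ≤ α ^ 2 := by
    have he : α ^ (2*n+2) = α ^ (2*n) * α ^ 2 := by ring
    rw [he]
    nlinarith [hpow1 (2*n), hpow0 (2*n), hpow0 2]
  have hD : 4 * Real.sqrt 2 * (1 - α ^ (2*n+2)) ≥ 96 - 64 * Real.sqrt 2 := by
    nlinarith [hp2, hs2, hs0, hs1, hα2]
  have hD0 : 0 < 4 * Real.sqrt 2 * (1 - α ^ (2*n+2)) := by nlinarith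
  have h1 := hr i j hji (le_of_lt hin)
  have h2 := hr (i+1) j (by omega) (by omega)
  rw [h1, h2]
  set D := 4 * Real.sqrt 2 * (1 - α ^ (2*n+2)) with hDdef
  -- bounds for f(i) = A * B
  set A := 1 - α ^ (i - j) with hAdef
  set B := 2 - α ^ (i + j + 1) + α ^ (2 * j + 1) +
      α ^ (2 * n - 2 * i + 1) * (1 - α ^ (i - j) - 2 * α ^ (i + j + 1)) with hBdef
  have hA0 : 0 ≤ A := by have := hpow1 (i - j); simp [hAdef]; linarith
  have hA1 : A ≤ 1 := by have := hpow0 (i - j); simp [hAdef]; linarith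
  have hq1 : α ^ (2 * n - 2 * i + 1) ≤ α := hpowa (2 * n - 2 * i)
  have hq0 : 0 < α ^ (2 * n - 2 * i + 1) := hpow0 _
  have hw1 : α ^ (i - j) + 2 * α ^ (i + j + 1) ≤ 1 + 2 * α := by
    have := hpow1 (i - j); have := hpowa (i + j); linarith
  have hw0 : 0 < α ^ (i - j) + 2 * α ^ (i + j + 1) := by
    have := hpow0 (i - j); have := hpow0 (i + j + 1); linarith
  have hBub : B ≤ 2 + 2 * α := by
    have hwub : 1 - α ^ (i - j) - 2 * α ^ (i + j + 1) ≤ 1 := by linarith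
    have h3 : α ^ (2 * n - 2 * i + 1) * (1 - α ^ (i - j) - 2 * α ^ (i + j + 1)) ≤ α := by
      nlinarith [mul_le_mul_of_nonneg_left hwub hq0.le, hq1]
    have := hpow0 (i + j + 1)
    have := hpowa (2*j)
    simp only [hBdef]
    linarith
  have hBlb : 0 ≤ B := by
    have hwlb : -(2 * α) ≤ 1 - α ^ (i - j) - 2 * α ^ (i + j + 1) := by linarith
    have h3 : α ^ (2 * n - 2 * i + 1) * (1 - α ^ (i - j) - 2 * α ^ (i + j + 1)) ≥
        -(2 * α * α) := by
      nlinarith [mul_le_mul_of_nonneg_left hwlb hq0.le,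
        mul_le_mul_of_nonneg_left hq1 (by positivity : (0:ℝ) ≤ 2 * α)]
    have := hpow0 (2*j+1)
    have := hpowa (i + j)
    simp only [hBdef]
    nlinarith [hα0, hα5]
  have hfub : A * B ≤ 2 + 2 * α := by nlinarith
  have hfD : A * B / D < 1 := by
    rw [div_lt_one hD0]
    have : 2 + 2 * α < D := by
      have h8 : 2 + 2 * α = 8 - 4 * Real.sqrt 2 := by rw [hα]; ring
      linarith [hD, hs3]
    linarith
  -- lower bound for f(i+1)
  have hA0' : 0 ≤ 1 - α ^ (i + 1 - j) := by have := hpow1 (i + 1 - j); linarith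
  have hBlb' : 0 ≤ 2 - α ^ (i + 1 + j + 1) + α ^ (2 * j + 1) +
      α ^ (2 * n - 2 * (i + 1) + 1) * (1 - α ^ (i + 1 - j) - 2 * α ^ (i + 1 + j + 1)) := by
    have hq1' : α ^ (2 * n - 2 * (i + 1) + 1) ≤ α := hpowa (2 * n - 2 * (i + 1))
    have hq0' : 0 < α ^ (2 * n - 2 * (i + 1) + 1) := hpow0 _
    have hw1' : α ^ (i + 1 - j) + 2 * α ^ (i + 1 + j + 1) ≤ 1 + 2 * α := by
      have := hpow1 (i + 1 - j); have := hpowa (i + 1 + j); linarith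
    have hw0' : 0 < α ^ (i + 1 - j) + 2 * α ^ (i + 1 + j + 1) := by
      have := hpow0 (i + 1 - j); have := hpow0 (i + 1 + j + 1); linarith
    have hwlb' : -(2 * α) ≤ 1 - α ^ (i + 1 - j) - 2 * α ^ (i + 1 + j + 1) := by linarith
    have h3 : α ^ (2 * n - 2 * (i + 1) + 1) *
        (1 - α ^ (i + 1 - j) - 2 * α ^ (i + 1 + j + 1)) ≥ -(2 * α * α) := by
      nlinarith [mul_le_mul_of_nonneg_left hwlb' hq0'.le,
        mul_le_mul_of_nonneg_left hq1' (by positivity : (0:ℝ) ≤ 2 * α)]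
    have := hpow0 (2*j+1)
    have := hpowa (i + 1 + j)
    nlinarith [hα0, hα5]
  have hf' : 0 ≤ (1 - α ^ (i + 1 - j)) * (2 - α ^ (i + 1 + j + 1) + α ^ (2 * j + 1) +
      α ^ (2 * n - 2 * (i + 1) + 1) * (1 - α ^ (i + 1 - j) - 2 * α ^ (i + 1 + j + 1))) / D :=
    div_nonneg (mul_nonneg hA0' hBlb') hD0.le
  push_cast
  linarith [hf', hfD]
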